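/- Let (X_i)_{i ∈ ℕ} be an i.i.d. sequence of real-valued random variables, let a ≤ b be reals, and set p_L = P(X_1 < a), p_U = P(X_1 > b) and p_max = max(p_L, p_U). If p_max ≤ 0.36, then there exists a constant C > 0 such that for every odd positive integer t, P(Error_t) ≤ C · t^{-1/2} · 0.96^t. -/

import Mathlib

open MeasureTheory ProbabilityTheory

section Aux

/-- Square of the central binomial coefficient bound: `C(2m,m)² (3m+1) ≤ 16^m`. -/
lemma aux_cb_sq (m : ℕ) : ((Nat.centralBinom m : ℝ))^2 * (3*m+1) ≤ 16^m := by
  induction m with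
  | zero => simp [Nat.centralBinom]
  | succ n ih =>
    have key : ((n:ℝ)+1) * (Nat.centralBinom (n+1)) = 2 * (2*n+1) * Nat.centralBinom n := by
      exact_mod_cast congrArg (fun x : ℕ => (x : ℝ)) (Nat.succ_mul_centralBinom_succ n)
    set x := (Nat.centralBinom n : ℝ) with hx
    set y := (Nat.centralBinom (n+1) : ℝ) with hy
    have h2 : ((n:ℝ)+1)^2 * y^2 = 4*(2*n+1)^2 * x^2 := by
      linear_combination (((n:ℝ)+1) * y + 2*(2*n+1)*x) * key
    have hpos : (0:ℝ) < ((n:ℝ)+1)^2 := by positivity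
    have hn : (0:ℝ) ≤ (n:ℝ) := Nat.cast_nonneg n
    rw [← mul_le_mul_iff_of_pos_left hpos]
    push_cast
    calc ((n:ℝ)+1)^2 * (y^2*(3*((n:ℝ)+1)+1)) = 4*(2*(n:ℝ)+1)^2*x^2*(3*(n:ℝ)+4) := by
          linear_combination (3*(n:ℝ)+4) * h2
      _ ≤ 16*((n:ℝ)+1)^2*(x^2*(3*(n:ℝ)+1)) := by nlinarith [mul_nonneg hn (sq_nonneg x)]
      _ ≤ 16*((n:ℝ)+1)^2*16^n := by
          apply mul_le_mul_of_nonneg_left ih (by positivity)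
      _ = ((n:ℝ)+1)^2*16^(n+1) := by ring

/-- `C(2m+1, m+1) √(2m+1) ≤ 2^(2m+1)`. -/
lemma aux_choose_odd_bound (m : ℕ) :
    (Nat.choose (2*m+1) (m+1) : ℝ) * Real.sqrt (2*m+1) ≤ 2^(2*m+1) := by
  have h1 : Nat.choose (2*m+1) (m+1) ≤ 2 * Nat.centralBinom m := by
    have h0 : Nat.choose (2*m+1) (m+1) = Nat.choose (2*m) m + Nat.choose (2*m) (m+1) :=
      Nat.choose_succ_succ (2*m) m
    have h2 : Nat.choose (2*m) (m+1) ≤ Nat.choose (2*m) m := by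
      have := Nat.choose_le_middle (m+1) (2*m)
      simpa [Nat.mul_div_cancel_left m (by norm_num : 0 < 2)] using this
    rw [Nat.centralBinom]
    omega
  have hcb : (Nat.centralBinom m : ℝ) * Real.sqrt (2*m+1) ≤ 4^m := by
    have ha : (0:ℝ) ≤ (Nat.centralBinom m : ℝ) * Real.sqrt (2*m+1) := by positivity
    have hsq : ((Nat.centralBinom m : ℝ) * Real.sqrt (2*m+1))^2 ≤ ((4:ℝ)^m)^2 := by
      rw [mul_pow, Real.sq_sqrt (by positivity)]
      calc (Nat.centralBinom m : ℝ)^2 * (2*(m:ℝ)+1) ≤ (Nat.centralBinom m : ℝ)^2 * (3*m+1) := by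
            apply mul_le_mul_of_nonneg_left _ (sq_nonneg _)
            linarith [Nat.cast_nonneg (α := ℝ) m]
        _ ≤ 16^m := aux_cb_sq m
        _ = ((4:ℝ)^m)^2 := by rw [← pow_mul, mul_comm m 2, pow_mul]; norm_num
    calc (Nat.centralBinom m : ℝ) * Real.sqrt (2*m+1)
        = Real.sqrt (((Nat.centralBinom m : ℝ) * Real.sqrt (2*m+1))^2) := (Real.sqrt_sq ha).symm
      _ ≤ Real.sqrt (((4:ℝ)^m)^2) := Real.sqrt_le_sqrt hsq
      _ = 4^m := Real.sqrt_sq (by positivity)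
  have h1' : (Nat.choose (2*m+1) (m+1) : ℝ) ≤ 2 * Nat.centralBinom m := by exact_mod_cast h1
  have hs : (0:ℝ) ≤ Real.sqrt (2*m+1) := Real.sqrt_nonneg _
  calc (Nat.choose (2*m+1) (m+1) : ℝ) * Real.sqrt (2*m+1)
      ≤ 2 * Nat.centralBinom m * Real.sqrt (2*m+1) := mul_le_mul_of_nonneg_right h1' hs
    _ = 2 * ((Nat.centralBinom m : ℝ) * Real.sqrt (2*m+1)) := by ring
    _ ≤ 2 * 4^m := by linarith [hcb]
    _ = 2^(2*m+1) := by rw [pow_succ, pow_mul]; norm_num [mul_comm]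

lemma aux_geom_le (r : ℝ) (h0 : 0 ≤ r) (h1 : r ≤ 9/16) (n : ℕ) :
    ∑ i ∈ Finset.range n, r ^ i ≤ 16/7 := by
  calc ∑ i ∈ Finset.range n, r ^ i ≤ ∑ i ∈ Finset.range n, (9/16 : ℝ) ^ i := by
        apply Finset.sum_le_sum
        intro i _
        exact pow_le_pow_left₀ h0 h1 i
    _ = ((9/16:ℝ)^n - 1)/((9/16) - 1) := geom_sum_eq (by norm_num) n
    _ ≤ 16/7 := by
        have h : (0:ℝ) ≤ (9/16:ℝ)^n := by positivity
        rw [div_le_iff_of_neg (by norm_num)]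
        linarith

/-- The key real estimate on the binomial upper tail. -/
lemma aux_real_tail (m : ℕ) (p q : ℝ) (hp0 : 0 ≤ p) (hp : p ≤ 0.36) (hq : q = 1 - p) :
    ∑ j ∈ Finset.Icc (m+1) (2*m+1), (Nat.choose (2*m+1) j : ℝ) * p^j * q^(2*m+1-j)
      ≤ 2 / Real.sqrt (2*m+1) * 0.96^(2*m+1) := by
  have hq0 : (0:ℝ) < q := by rw [hq]; linarith
  have hCk : ∀ j, (Nat.choose (2*m+1) j : ℝ) ≤ (Nat.choose (2*m+1) (m+1) : ℝ) := by
    intro j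
    have h1 : Nat.choose (2*m+1) j ≤ Nat.choose (2*m+1) ((2*m+1)/2) := Nat.choose_le_middle j _
    have h2 : (2*m+1)/2 = m := by omega
    have h3 : Nat.choose (2*m+1) m = Nat.choose (2*m+1) (m+1) := by
      rw [← Nat.choose_symm (by omega : m+1 ≤ 2*m+1)]
      congr 1; omega
    rw [h2, h3] at h1
    exact_mod_cast h1
  set Ck := (Nat.choose (2*m+1) (m+1) : ℝ) with hCkdef
  have hCk0 : (0:ℝ) ≤ Ck := Nat.cast_nonneg _
  have step1 : ∑ j ∈ Finset.Icc (m+1) (2*m+1), (Nat.choose (2*m+1) j : ℝ) * p^j * q^(2*m+1-j)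
      ≤ ∑ j ∈ Finset.Icc (m+1) (2*m+1), (Ck * (p^(m+1) * q^m)) * (p/q)^(j-(m+1)) := by
    apply Finset.sum_le_sum
    intro j hj
    rw [Finset.mem_Icc] at hj
    obtain ⟨d, rfl⟩ : ∃ d, j = m+1+d := ⟨j-(m+1), by omega⟩
    have hd : d ≤ m := by omega
    have he1 : 2*m+1-(m+1+d) = m-d := by omega
    have he2 : m+1+d-(m+1) = d := by omega
    have hqsplit : q^m = q^(m-d) * q^d := by rw [← pow_add]; congr 1; omega
    rw [he1, he2]
    have heq : (Ck * (p^(m+1) * q^m)) * (p/q)^d = Ck * p^(m+1+d) * q^(m-d) := by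
      rw [hqsplit, div_pow]
      field_simp
      ring
    rw [heq]
    have hterm : (0:ℝ) ≤ p^(m+1+d) * q^(m-d) := by positivity
    calc (Nat.choose (2*m+1) (m+1+d) : ℝ) * p^(m+1+d) * q^(m-d)
        = (Nat.choose (2*m+1) (m+1+d) : ℝ) * (p^(m+1+d) * q^(m-d)) := by ring
      _ ≤ Ck * (p^(m+1+d) * q^(m-d)) := mul_le_mul_of_nonneg_right (hCk _) hterm
      _ = Ck * p^(m+1+d) * q^(m-d) := by ring
  have step2 : ∑ j ∈ Finset.Icc (m+1) (2*m+1), (Ck * (p^(m+1) * q^m)) * (p/q)^(j-(m+1))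
      = (Ck * (p^(m+1) * q^m)) * ∑ i ∈ Finset.range (m+1), (p/q)^i := by
    rw [← Finset.mul_sum]
    congr 1
    rw [← Finset.Ico_add_one_right_eq_Icc, Finset.sum_Ico_eq_sum_range]
    have : 2*m+1+1-(m+1) = m+1 := by omega
    rw [this]
    apply Finset.sum_congr rfl
    intro i _
    congr 1
    omega
  have hr0 : (0:ℝ) ≤ p/q := div_nonneg hp0 hq0.le
  have hr1 : p/q ≤ 9/16 := by
    rw [div_le_iff₀ hq0]
    rw [hq]; nlinarith
  have step3 := aux_geom_le (p/q) hr0 hr1 (m+1)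
  have hst : (0:ℝ) < Real.sqrt (2*m+1) := Real.sqrt_pos.2 (by positivity)
  have hCkb : Ck ≤ 2^(2*m+1) / Real.sqrt (2*m+1) := by
    rw [le_div_iff₀ hst]
    exact aux_choose_odd_bound m
  have hpq : p * q ≤ 0.2304 := by rw [hq]; nlinarith
  have hpq0 : 0 ≤ p * q := by positivity
  have hpow : p^(m+1) * q^m ≤ 0.36 * 0.2304^m := by
    have h1 : p^(m+1) * q^m = p * (p*q)^m := by rw [mul_pow]; ring
    rw [h1]
    have h2 : (p*q)^m ≤ 0.2304^m := pow_le_pow_left₀ hpq0 hpq m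
    have h3 : (0:ℝ) ≤ (p*q)^m := by positivity
    nlinarith
  have hpow0 : (0:ℝ) ≤ p^(m+1) * q^m := by positivity
  calc ∑ j ∈ Finset.Icc (m+1) (2*m+1), (Nat.choose (2*m+1) j : ℝ) * p^j * q^(2*m+1-j)
      ≤ (Ck * (p^(m+1) * q^m)) * ∑ i ∈ Finset.range (m+1), (p/q)^i := by rw [← step2]; exact step1
    _ ≤ (Ck * (p^(m+1) * q^m)) * (16/7) := by
        apply mul_le_mul_of_nonneg_left step3 (by positivity)
    _ ≤ ((2^(2*m+1) / Real.sqrt (2*m+1)) * (0.36 * 0.2304^m)) * (16/7) := by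
        apply mul_le_mul_of_nonneg_right _ (by norm_num)
        apply mul_le_mul hCkb hpow hpow0 (by positivity)
    _ ≤ 2 / Real.sqrt (2*m+1) * 0.96^(2*m+1) := by
        rw [div_mul_eq_mul_div, div_mul_eq_mul_div, div_mul_eq_mul_div,
          div_le_div_iff₀ hst hst]
        have e1 : (0.96:ℝ)^(2*m+1) = 0.96 * 0.9216^m := by
          rw [pow_succ, pow_mul]
          norm_num
          ring
        have e2 : (2:ℝ)^(2*m+1) = 2 * 4^m := by
          rw [pow_succ, pow_mul]
          norm_num
          ring
        rw [e1, e2]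
        have e3 : (4:ℝ)^m * 0.2304^m = 0.9216^m := by
          rw [← mul_pow]; norm_num
        have h4 : (0:ℝ) ≤ 0.9216^m := by positivity
        nlinarith [hst, mul_pos hst hst, h4, mul_nonneg h4 hst.le]

/-- If a sorted list has its `i`-th element `< a`, then at least `i+1` elements are `< a`. -/
lemma aux_countP_lt_of_sorted (l : List ℝ) (hl : l.Pairwise (· ≤ ·)) (a : ℝ) (i : ℕ)
    (hi : i < l.length) (h : l.getD i 0 < a) :
    i + 1 ≤ l.countP (fun y => decide (y < a)) := by
  have hget : l.get ⟨i, hi⟩ < a := by rwa [l.getD_eq_getElem 0 hi] at h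
  have htake : ∀ y ∈ l.take (i+1), decide (y < a) = true := by
    intro y hy
    obtain ⟨j, hj, rfl⟩ := List.getElem_of_mem hy
    rw [List.length_take] at hj
    have hj' : j ≤ i := by omega
    have hjl : j < l.length := by omega
    rw [List.getElem_take]
    simp only [decide_eq_true_eq]
    calc l[j] = l.get ⟨j, hjl⟩ := rfl
      _ ≤ l.get ⟨i, hi⟩ := hl.rel_get_of_le (by simpa using hj')
      _ < a := hget
  have hsplit : l.countP (fun y => decide (y < a)) =
      (l.take (i+1)).countP (fun y => decide (y < a)) +
      (l.drop (i+1)).countP (fun y => decide (y < a)) := by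
    conv_lhs => rw [← List.take_append_drop (i+1) l]
    rw [List.countP_append]
  have htlen : (l.take (i+1)).length = i + 1 := by
    rw [List.length_take]; omega
  have : (l.take (i+1)).countP (fun y => decide (y < a)) = i + 1 := by
    have h2 := List.countP_eq_length.2 htake
    rwa [htlen] at h2
  omega

/-- If a sorted list has its `i`-th element `> b`, at least `length - i` elements are `> b`. -/
lemma aux_countP_gt_of_sorted (l : List ℝ) (hl : l.Pairwise (· ≤ ·)) (b : ℝ) (i : ℕ)
    (hi : i < l.length) (h : b < l.getD i 0) :
    l.length - i ≤ l.countP (fun y => decide (b < y)) := by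
  have hget : b < l.get ⟨i, hi⟩ := by rwa [l.getD_eq_getElem 0 hi] at h
  have hdrop : ∀ y ∈ l.drop i, decide (b < y) = true := by
    intro y hy
    obtain ⟨j, hj, rfl⟩ := List.getElem_of_mem hy
    rw [List.length_drop] at hj
    have hjl : i + j < l.length := by omega
    rw [List.getElem_drop]
    simp only [decide_eq_true_eq]
    calc b < l.get ⟨i, hi⟩ := hget
      _ ≤ l.get ⟨i + j, hjl⟩ := hl.rel_get_of_le (by simp)
  have hsplit : l.countP (fun y => decide (b < y)) =
      (l.take i).countP (fun y => decide (b < y)) +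
      (l.drop i).countP (fun y => decide (b < y)) := by
    conv_lhs => rw [← List.take_append_drop i l]
    rw [List.countP_append]
  have hdlen : (l.drop i).length = l.length - i := by rw [List.length_drop]
  have : (l.drop i).countP (fun y => decide (b < y)) = l.length - i := by
    have h2 := List.countP_eq_length.2 hdrop
    rwa [hdlen] at h2
  omega

end Aux

/-- The median of `t` reals: the `⌈t/2⌉`-th smallest among them. -/
noncomputable def median (t : ℕ) (x : Fin t → ℝ) : ℝ :=
  ((Finset.univ.val.map x).sort (· ≤ ·)).getD ((t + 1) / 2 - 1) 0

/-- `Error_t`: the event that the median of `X_1, …, X_t` is `< a` or `> b`. -/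
def errorEvent {Ω : Type*} (X : ℕ → Ω → ℝ) (a b : ℝ) (t : ℕ) : Set Ω :=
  {ω | median t (fun i : Fin t => X i ω) < a ∨ b < median t (fun i : Fin t => X i ω)}

section Aux2

lemma aux_length_sort_univ {t : ℕ} (x : Fin t → ℝ) :
    ((Finset.univ.val.map x).sort (· ≤ ·)).length = t := by
  rw [Multiset.length_sort, Multiset.card_map]
  simp

lemma aux_count_filter_eq {t : ℕ} (x : Fin t → ℝ) (p : ℝ → Prop) [DecidablePred p] :
    ((Finset.univ.val.map x).sort (· ≤ ·)).countP (fun y => decide (p y))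
      = (Finset.univ.filter (fun i => p (x i))).card := by
  have h1 : Multiset.countP p (Finset.univ.val.map x)
      = Multiset.card ((Finset.univ.val : Multiset (Fin t)).filter (fun i => p (x i))) :=
    Multiset.countP_map x Finset.univ.val p
  rw [← Multiset.sort_eq (Finset.univ.val.map x) (· ≤ ·)] at h1
  rw [Multiset.coe_countP] at h1
  rw [h1, Finset.card_filter]
  simp [Finset.card, Multiset.countP_eq_card_filter]

lemma aux_median_lt_count {m : ℕ} (x : Fin (2*m+1) → ℝ) (a : ℝ)
    (h : median (2*m+1) x < a) :
    m + 1 ≤ (Finset.univ.filter (fun i => x i < a)).card := by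
  classical
  set l := ((Finset.univ.val.map x).sort (· ≤ ·)) with hl
  have hlen : l.length = 2*m+1 := aux_length_sort_univ x
  have hi : m < l.length := by omega
  have hmed : l.getD m 0 < a := by
    have : (2*m+1+1)/2 - 1 = m := by omega
    rwa [median, this] at h
  have := aux_countP_lt_of_sorted l (Multiset.pairwise_sort _ _) a m hi hmed
  rwa [aux_count_filter_eq x (fun y => y < a)] at this

lemma aux_median_gt_count {m : ℕ} (x : Fin (2*m+1) → ℝ) (b : ℝ)
    (h : b < median (2*m+1) x) :
    m + 1 ≤ (Finset.univ.filter (fun i => b < x i)).card := by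
  classical
  set l := ((Finset.univ.val.map x).sort (· ≤ ·)) with hl
  have hlen : l.length = 2*m+1 := aux_length_sort_univ x
  have hi : m < l.length := by omega
  have hmed : b < l.getD m 0 := by
    have : (2*m+1+1)/2 - 1 = m := by omega
    rwa [median, this] at h
  have := aux_countP_gt_of_sorted l (Multiset.pairwise_sort _ _) b m hi hmed
  rw [aux_count_filter_eq x (fun y => b < y)] at this
  omega

variable {Ω : Type*} [MeasurableSpace Ω]

open Classical in
/-- Tail bound: probability that at least `m+1` of `2m+1` iid samples land in `A`. -/
lemma aux_tail_bound (μ : Measure Ω) [IsProbabilityMeasure μ]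
    (X : ℕ → Ω → ℝ) (hmeas : ∀ i, Measurable (X i))
    (hindep : iIndepFun X μ)
    (hident : ∀ i, Measure.map (X i) μ = Measure.map (X 0) μ)
    (A : Set ℝ) (hA : MeasurableSet A)
    (hp : (μ (X 0 ⁻¹' A)).toReal ≤ 0.36) (m : ℕ) :
    (μ {ω | m + 1 ≤ (Finset.univ.filter (fun i : Fin (2*m+1) => X (i:ℕ) ω ∈ A)).card}).toReal
      ≤ 2 / Real.sqrt (2*m+1) * 0.96 ^ (2*m+1) := by
  classical
  set t := 2*m+1 with ht
  set pE := μ (X 0 ⁻¹' A) with hpE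
  set qE := μ (X 0 ⁻¹' Aᶜ) with hqE
  have hXA : ∀ n, μ (X n ⁻¹' A) = pE := by
    intro n
    rw [hpE, ← Measure.map_apply (hmeas n) hA, ← Measure.map_apply (hmeas 0) hA, hident n]
  have hXAc : ∀ n, μ (X n ⁻¹' Aᶜ) = qE := by
    intro n
    rw [hqE, ← Measure.map_apply (hmeas n) hA.compl, ← Measure.map_apply (hmeas 0) hA.compl,
      hident n]
  set sets : Finset (Fin t) → ℕ → Set ℝ := fun S n =>
    if h : n < t then (if (⟨n, h⟩ : Fin t) ∈ S then A else Aᶜ) else Set.univ with hsets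
  set E : Finset (Fin t) → Set Ω := fun S => ⋂ n ∈ Finset.range t, X n ⁻¹' sets S n with hE
  set 𝒮 : Finset (Finset (Fin t)) := Finset.univ.filter (fun S => m + 1 ≤ S.card) with h𝒮
  have hincl : {ω | m + 1 ≤ (Finset.univ.filter (fun i : Fin t => X (i:ℕ) ω ∈ A)).card}
      ⊆ ⋃ S ∈ 𝒮, E S := by
    intro ω hω
    simp only [Set.mem_setOf_eq] at hω
    refine Set.mem_iUnion₂.2 ⟨Finset.univ.filter (fun i : Fin t => X (i:ℕ) ω ∈ A), ?_, ?_⟩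
    · simp only [h𝒮, Finset.mem_filter, Finset.mem_univ, true_and]
      exact hω
    · simp only [hE, Set.mem_iInter]
      intro n hn
      rw [Finset.mem_range] at hn
      simp only [hsets, Set.mem_preimage, dif_pos hn]
      by_cases hmem : (⟨n, hn⟩ : Fin t) ∈ Finset.univ.filter (fun i : Fin t => X (i:ℕ) ω ∈ A)
      · rw [if_pos hmem]
        simpa using (Finset.mem_filter.1 hmem).2
      · rw [if_neg hmem]
        simp only [Finset.mem_filter, Finset.mem_univ, true_and] at hmem
        exact hmem
  have hmeasE : ∀ S : Finset (Fin t), μ (E S) = pE ^ S.card * qE ^ (t - S.card) := by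
    intro S
    have hprod : μ (E S) = ∏ n ∈ Finset.range t, μ (X n ⁻¹' sets S n) := by
      apply hindep.meas_biInter
      intro n hn
      refine ⟨sets S n, ?_, rfl⟩
      simp only [hsets]
      split_ifs
      · exact hA
      · exact hA.compl
      · exact MeasurableSet.univ
    rw [hprod]
    have hfac : ∀ n ∈ Finset.range t,
        μ (X n ⁻¹' sets S n) = if h : n < t then (if (⟨n, h⟩ : Fin t) ∈ S then pE else qE)
          else 1 := by
      intro n hn
      rw [Finset.mem_range] at hn
      simp only [hsets, dif_pos hn]
      split_ifs
      · exact hXA n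
      · exact hXAc n
    rw [Finset.prod_congr rfl hfac]
    rw [← Fin.prod_univ_eq_prod_range
      (fun n => if h : n < t then (if (⟨n, h⟩ : Fin t) ∈ S then pE else qE) else 1) t]
    have : ∀ i : Fin t,
        (if h : (i:ℕ) < t then (if (⟨(i:ℕ), h⟩ : Fin t) ∈ S then pE else qE) else 1)
          = if i ∈ S then pE else qE := by
      intro i
      rw [dif_pos i.isLt]
    rw [Finset.prod_congr rfl (fun i _ => this i)]
    rw [Finset.prod_ite, Finset.prod_const, Finset.prod_const]
    congr 2
    · congr 1
      ext i
      simp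
    · have h1 : (Finset.univ.filter (fun i => i ∈ S)).card
          + (Finset.univ.filter (fun i => ¬ i ∈ S)).card = t := by
        rw [Finset.card_filter_add_card_filter_not]
        simp
      have h2 : (Finset.univ.filter (fun i => i ∈ S)).card = S.card := by
        congr 1; ext i; simp
      omega
  set p := pE.toReal with hp'
  set q := qE.toReal with hq'
  have hp0 : 0 ≤ p := ENNReal.toReal_nonneg
  have hcompl := prob_add_prob_compl (μ := μ) ((hmeas 0) hA)
  have hqeq : q = 1 - p := by
    have h1 : pE + qE = 1 := by
      rw [hpE, hqE, Set.preimage_compl]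
      exact hcompl
    have h2 : p + q = 1 := by
      have := congrArg ENNReal.toReal h1
      rwa [ENNReal.toReal_add (measure_ne_top μ _) (measure_ne_top μ _), ENNReal.toReal_one]
        at this
    linarith
  have hchain : μ {ω | m + 1 ≤ (Finset.univ.filter (fun i : Fin t => X (i:ℕ) ω ∈ A)).card}
      ≤ ∑ S ∈ 𝒮, μ (E S) :=
    le_trans (measure_mono hincl) (measure_biUnion_finset_le 𝒮 E)
  have hsum_ne : (∑ S ∈ 𝒮, μ (E S)) ≠ ⊤ := by
    exact ne_of_lt (ENNReal.sum_lt_top.mpr fun S _ => measure_lt_top μ _)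
  have h1 : (μ {ω | m + 1 ≤ (Finset.univ.filter (fun i : Fin t => X (i:ℕ) ω ∈ A)).card}).toReal
      ≤ (∑ S ∈ 𝒮, μ (E S)).toReal := ENNReal.toReal_mono hsum_ne hchain
  rw [ENNReal.toReal_sum (fun S _ => measure_ne_top μ _)] at h1
  have hterm : ∀ S ∈ 𝒮, (μ (E S)).toReal = p ^ S.card * q ^ (t - S.card) := by
    intro S _
    rw [hmeasE S, ENNReal.toReal_mul, ENNReal.toReal_pow, ENNReal.toReal_pow]
  rw [Finset.sum_congr rfl hterm] at h1
  have h𝒮eq : 𝒮 = (Finset.Icc (m+1) t).biUnion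
      (fun j => Finset.powersetCard j Finset.univ) := by
    ext S
    simp only [h𝒮, Finset.mem_filter, Finset.mem_univ, true_and, Finset.mem_biUnion,
      Finset.mem_Icc, Finset.mem_powersetCard]
    constructor
    · intro h
      refine ⟨S.card, ⟨h, ?_⟩, Finset.subset_univ S, rfl⟩
      calc S.card ≤ Fintype.card (Fin t) := Finset.card_le_univ S
        _ = t := Fintype.card_fin t
    · rintro ⟨j, ⟨hj1, _⟩, _, rfl⟩
      exact hj1
  have hdisj : (↑(Finset.Icc (m+1) t) : Set ℕ).PairwiseDisjoint
      (fun j => Finset.powersetCard j (Finset.univ : Finset (Fin t))) := by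
    intro a _ b _ hab
    simp only [Finset.disjoint_left]
    intro S hSa hSb
    exact hab ((Finset.mem_powersetCard.1 hSa).2.symm.trans (Finset.mem_powersetCard.1 hSb).2)
  have hgroup : ∑ S ∈ 𝒮, p ^ S.card * q ^ (t - S.card)
      = ∑ j ∈ Finset.Icc (m+1) t, (Nat.choose t j : ℝ) * p^j * q^(t-j) := by
    rw [h𝒮eq, Finset.sum_biUnion hdisj]
    apply Finset.sum_congr rfl
    intro j hj
    have hconst : ∀ S ∈ Finset.powersetCard j (Finset.univ : Finset (Fin t)),
        p ^ S.card * q ^ (t - S.card) = p ^ j * q ^ (t - j) := by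
      intro S hS
      rw [(Finset.mem_powersetCard.1 hS).2]
    rw [Finset.sum_congr rfl hconst, Finset.sum_const, Finset.card_powersetCard,
      Finset.card_univ, Fintype.card_fin, nsmul_eq_mul]
    ring
  rw [hgroup] at h1
  exact le_trans h1 (aux_real_tail m p q hp0 hp hqeq)

end Aux2

theorem stmt_6 {Ω : Type*} [MeasurableSpace Ω] (μ : Measure Ω) [IsProbabilityMeasure μ]
    (X : ℕ → Ω → ℝ) (hmeas : ∀ i, Measurable (X i))
    (hindep : iIndepFun X μ)
    (hident : ∀ i, Measure.map (X i) μ = Measure.map (X 0) μ)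
    (a b : ℝ) (hab : a ≤ b)
    (pL pU pmax : ℝ)
    (hpL : pL = (μ {ω | X 0 ω < a}).toReal)
    (hpU : pU = (μ {ω | b < X 0 ω}).toReal)
    (hpmax : pmax = max pL pU)
    (hbound : pmax ≤ 0.36) :
    ∃ C : ℝ, 0 < C ∧ ∀ t : ℕ, Odd t → 0 < t →
      (μ (errorEvent X a b t)).toReal ≤ C / Real.sqrt t * 0.96 ^ t := by
  classical
  refine ⟨4, by norm_num, ?_⟩
  intro t hodd hpos
  obtain ⟨m, hm⟩ := hodd
  subst hm
  -- the two bad events, phrased as in `aux_tail_bound`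
  set E1 : Set Ω :=
    {ω | m + 1 ≤ (Finset.univ.filter (fun i : Fin (2*m+1) => X (i:ℕ) ω ∈ Set.Iio a)).card}
    with hE1
  set E2 : Set Ω :=
    {ω | m + 1 ≤ (Finset.univ.filter (fun i : Fin (2*m+1) => X (i:ℕ) ω ∈ Set.Ioi b)).card}
    with hE2
  have hincl : errorEvent X a b (2*m+1) ⊆ E1 ∪ E2 := by
    intro ω hω
    cases hω with
    | inl h =>
      left
      have h1 := aux_median_lt_count (fun i : Fin (2*m+1) => X (i:ℕ) ω) a h
      simp only [hE1, Set.mem_setOf_eq]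
      have heq : (Finset.univ.filter (fun i : Fin (2*m+1) => X (i:ℕ) ω ∈ Set.Iio a))
          = (Finset.univ.filter (fun i : Fin (2*m+1) => X (i:ℕ) ω < a)) := by
        apply Finset.filter_congr
        intro i _
        simp [Set.mem_Iio]
      rw [heq]
      convert h1 using 2
    | inr h =>
      right
      have h1 := aux_median_gt_count (fun i : Fin (2*m+1) => X (i:ℕ) ω) b h
      simp only [hE2, Set.mem_setOf_eq]
      have heq : (Finset.univ.filter (fun i : Fin (2*m+1) => X (i:ℕ) ω ∈ Set.Ioi b))
          = (Finset.univ.filter (fun i : Fin (2*m+1) => b < X (i:ℕ) ω)) := by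
        apply Finset.filter_congr
        intro i _
        simp [Set.mem_Ioi]
      rw [heq]
      convert h1 using 2
  -- probabilities of the one-sided events
  have hpL' : (μ (X 0 ⁻¹' Set.Iio a)).toReal ≤ 0.36 := by
    have : X 0 ⁻¹' Set.Iio a = {ω | X 0 ω < a} := rfl
    rw [this, ← hpL]
    exact le_trans (le_trans (le_max_left pL pU) (le_of_eq hpmax.symm)) hbound
  have hpU' : (μ (X 0 ⁻¹' Set.Ioi b)).toReal ≤ 0.36 := by
    have : X 0 ⁻¹' Set.Ioi b = {ω | b < X 0 ω} := rfl
    rw [this, ← hpU]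
    exact le_trans (le_trans (le_max_right pL pU) (le_of_eq hpmax.symm)) hbound
  have hb1 := aux_tail_bound μ X hmeas hindep hident (Set.Iio a) measurableSet_Iio hpL' m
  have hb2 := aux_tail_bound μ X hmeas hindep hident (Set.Ioi b) measurableSet_Ioi hpU' m
  have hmono : μ (errorEvent X a b (2*m+1)) ≤ μ E1 + μ E2 :=
    le_trans (measure_mono hincl) (measure_union_le E1 E2)
  have hsum_ne : μ E1 + μ E2 ≠ ⊤ :=
    ENNReal.add_ne_top.2 ⟨measure_ne_top μ _, measure_ne_top μ _⟩
  have h1 : (μ (errorEvent X a b (2*m+1))).toReal ≤ (μ E1 + μ E2).toReal :=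
    ENNReal.toReal_mono hsum_ne hmono
  rw [ENNReal.toReal_add (measure_ne_top μ _) (measure_ne_top μ _)] at h1
  have hcast : ((2*m+1 : ℕ) : ℝ) = 2*(m:ℝ)+1 := by push_cast; ring
  calc (μ (errorEvent X a b (2*m+1))).toReal
      ≤ (μ E1).toReal + (μ E2).toReal := h1
    _ ≤ 2 / Real.sqrt (2*m+1) * 0.96 ^ (2*m+1) + 2 / Real.sqrt (2*m+1) * 0.96 ^ (2*m+1) := by
        apply add_le_add
        · exact le_trans (le_of_eq (by rfl)) hb1
        · exact le_trans (le_of_eq (by rfl)) hb2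
    _ = 4 / Real.sqrt (2*(m:ℝ)+1) * 0.96 ^ (2*m+1) := by ring
    _ = 4 / Real.sqrt ((2*m+1 : ℕ) : ℝ) * 0.96 ^ (2*m+1) := by rw [hcast]
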